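/- Let P be a finite poset, h a linear extension, and C_P = {(x,y) : x <_P y}. For every p, any family of p disjoint antichains of maximal total size can be rearranged into p disjoint antichains of the same total size that are pairwise non-semi-overlapping (i.e., for no pair d_i, d_j with i < j do there exist x ∈ d_i, y ∈ d_j with y <_P x). Consequently D'_p = D_p, where D_p is the maximal total size of p disjoint antichains. -/

import Mathlib

variable {α : Type*}

/-- `asc(S)`: one plus the number of consecutive ascents (in the partial order),
`0` for the empty sequence. -/
noncomputable def ascCount [Preorder α] (l : List α) : ℕ :=
  if l.isEmpty then 0 else 1 + Nat.card {p : α × α // p ∈ l.zip l.tail ∧ p.1 < p.2}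

/-- `desc(S)`: the length of the longest subsequence in which no earlier element
is strictly below a later one. -/
noncomputable def descCount [Preorder α] (l : List α) : ℕ :=
  sSup {m | ∃ t : List α, t.Sublist l ∧ t.Pairwise (fun a b => ¬ a < b) ∧ t.length = m}

/-- A sequence of distinct elements is adjacentable if every consecutive pair lies in `C`. -/
def IsAdjacentable (C : α → α → Prop) (l : List α) : Prop :=
  l.Nodup ∧ l.Chain' C

/-- A sequence of distinct elements is `h`-ordered if `h` strictly increases along it. -/
def IsHOrdered {n : ℕ} (h : α ≃ Fin n) (l : List α) : Prop :=
  l.Nodup ∧ l.Chain' (fun a b => h a < h b)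

/-- Two sequences are semi-overlapping if each contains an element `C`-below an
element of the other. -/
def SemiOverlapping (C : α → α → Prop) (s t : List α) : Prop :=
  (∃ x ∈ s, ∃ y ∈ t, C y x) ∧ (∃ x ∈ s, ∃ y ∈ t, C x y)

/-- A family of pairwise disjoint sequences. -/
def FamilyDisjoint {k : ℕ} (S : Fin k → List α) : Prop :=
  ∀ i j, i ≠ j → ∀ x, x ∈ S i → x ∉ S j

/-- `A'_k`: the maximum of `asc(S₁) + ⋯ + asc(S_k)` over `k` pairwise disjoint
adjacentable sequences. -/
noncomputable def Aval [Preorder α] (C : α → α → Prop) (k : ℕ) : ℕ :=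
  sSup {m | ∃ S : Fin k → List α, (∀ i, IsAdjacentable C (S i)) ∧ FamilyDisjoint S ∧
    m = ∑ i, ascCount (S i)}

/-- `D'_k`: the maximum of `desc(S₁) + ⋯ + desc(S_k)` over `k` pairwise disjoint,
pairwise non-semi-overlapping `h`-ordered sequences. -/
noncomputable def Dval [Preorder α] {n : ℕ} (h : α ≃ Fin n) (C : α → α → Prop) (k : ℕ) : ℕ :=
  sSup {m | ∃ S : Fin k → List α, (∀ i, IsHOrdered h (S i)) ∧ FamilyDisjoint S ∧
    (∀ i j, i ≠ j → ¬ SemiOverlapping C (S i) (S j)) ∧ m = ∑ i, descCount (S i)}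

/-- `f` (with `f k` playing the role of `λ_{k+1}`) is a partition of `n`. -/
def IsPartitionOf (n : ℕ) (f : ℕ → ℕ) : Prop :=
  (∀ k, f (k + 1) ≤ f k) ∧ ∃ N, (∑ k ∈ Finset.range N, f k = n) ∧ ∀ k, N ≤ k → f k = 0

/-- `f` and `g` are conjugate partitions of `n` (indexed from `0`, so `f k = λ_{k+1}`):
`μ_j = #{i : λ_i ≥ j}`. -/
def ConjugatePartitions (n : ℕ) (f g : ℕ → ℕ) : Prop :=
  IsPartitionOf n f ∧ IsPartitionOf n g ∧ ∀ j, g j = Nat.card {i : ℕ | j + 1 ≤ f i}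

section AuxAnti

variable [PartialOrder α]

/-- Length (minus one) of the longest strict chain inside `U` ending at `x`. -/
noncomputable def pht (U : Finset α) (x : α) : ℕ :=
  sSup {k | ∃ l : List α, l.Chain' (· < ·) ∧ (∀ a ∈ l, a ∈ U) ∧
    l.getLast? = some x ∧ l.length = k + 1}

lemma pht_mem_le (U : Finset α) (x : α) :
    ∀ k ∈ {k | ∃ l : List α, l.Chain' (· < ·) ∧ (∀ a ∈ l, a ∈ U) ∧
      l.getLast? = some x ∧ l.length = k + 1}, k ≤ U.card := by
  classical
  rintro k ⟨l, hc, hU, -, hlen⟩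
  have hnd : l.Nodup := (List.isChain_iff_pairwise.mp hc).imp ne_of_lt
  have hsub : l.toFinset ⊆ U := fun a ha => hU a (List.mem_toFinset.mp ha)
  have hcard := Finset.card_le_card hsub
  rw [List.toFinset_card_of_nodup hnd] at hcard
  omega

lemma pht_spec {U : Finset α} {x : α} (hx : x ∈ U) :
    ∃ l : List α, l.Chain' (· < ·) ∧ (∀ a ∈ l, a ∈ U) ∧
      l.getLast? = some x ∧ l.length = pht U x + 1 := by
  have h0 : (0 : ℕ) ∈ {k | ∃ l : List α, l.Chain' (· < ·) ∧ (∀ a ∈ l, a ∈ U) ∧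
      l.getLast? = some x ∧ l.length = k + 1} :=
    ⟨[x], List.isChain_singleton x, by simpa using hx, by simp, by simp⟩
  exact Nat.sSup_mem ⟨0, h0⟩ ⟨U.card, pht_mem_le U x⟩

lemma pht_lt {U : Finset α} {x y : α} (hx : x ∈ U) (hy : y ∈ U) (hxy : x < y) :
    pht U x < pht U y := by
  obtain ⟨l, hc, hU, hlast, hlen⟩ := pht_spec hx
  have hmem : pht U x + 1 ∈ {k | ∃ l : List α, l.Chain' (· < ·) ∧ (∀ a ∈ l, a ∈ U) ∧
      l.getLast? = some y ∧ l.length = k + 1} := by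
    refine ⟨l ++ [y], ?_, ?_, List.getLast?_concat, by simp [hlen]⟩
    · refine List.isChain_append.mpr ⟨hc, List.isChain_singleton y, ?_⟩
      intro a ha b hb
      rw [hlast] at ha
      simp only [Option.mem_def, Option.some.injEq] at ha
      simp only [List.head?_cons, Option.mem_def, Option.some.injEq] at hb
      subst ha; subst hb; exact hxy
    · intro a ha
      rcases List.mem_append.mp ha with h' | h'
      · exact hU a h'
      · simp only [List.mem_singleton] at h'; subst h'; exact hy
  have h4 : pht U x + 1 ≤ pht U y := le_csSup ⟨U.card, pht_mem_le U y⟩ hmem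
  omega

lemma pht_lt_p [DecidableEq α] {p : ℕ} (d : Fin p → Finset α)
    (hanti : ∀ i, IsAntichain (· ≤ ·) (d i : Set α)) {x : α}
    (hx : x ∈ Finset.univ.biUnion d) : pht (Finset.univ.biUnion d) x < p := by
  classical
  obtain ⟨i₀, -, -⟩ := Finset.mem_biUnion.mp hx
  haveI : Inhabited (Fin p) := ⟨i₀⟩
  obtain ⟨l, hc, hU, hlast, hlen⟩ := pht_spec hx
  set g : α → Fin p := fun a => if h : ∃ i, a ∈ d i then h.choose else default with hg
  have hgmem : ∀ a ∈ l, a ∈ d (g a) := by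
    intro a ha
    have hm := hU a ha
    rw [Finset.mem_biUnion] at hm
    obtain ⟨i, -, hi⟩ := hm
    have hex : ∃ i, a ∈ d i := ⟨i, hi⟩
    simp only [hg, dif_pos hex]
    exact hex.choose_spec
  have hpw : List.Pairwise (fun a b => a < b ∨ b < a) l :=
    (List.isChain_iff_pairwise.mp hc).imp Or.inl
  have hcomp : ∀ ⦃a⦄, a ∈ l → ∀ ⦃b⦄, b ∈ l → a ≠ b → a < b ∨ b < a := by
    haveI : Std.Symm (fun a b : α => a < b ∨ b < a) := ⟨fun a b h => h.symm⟩
    exact hpw.forall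
  have hnd : l.Nodup := (List.isChain_iff_pairwise.mp hc).imp ne_of_lt
  have hinj : Set.InjOn g ↑l.toFinset := by
    intro a ha b hb hab
    by_contra hne
    have ha' := List.mem_toFinset.mp ha
    have hb' := List.mem_toFinset.mp hb
    rcases hcomp ha' hb' hne with hlt | hlt
    · exact hanti (g b) (by rw [← hab]; exact hgmem a ha') (hgmem b hb') hne hlt.le
    · exact hanti (g b) (hgmem b hb') (by rw [← hab]; exact hgmem a ha')
        (Ne.symm hne) hlt.le
  have hmaps : ∀ a ∈ l.toFinset, g a ∈ (Finset.univ : Finset (Fin p)) := by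
    intro a _; exact Finset.mem_univ _
  have hcard := Finset.card_le_card_of_injOn g hmaps hinj
  rw [List.toFinset_card_of_nodup hnd, hlen, Finset.card_univ, Fintype.card_fin] at hcard
  omega

lemma exists_peel [DecidableEq α] {p : ℕ} (d : Fin p → Finset α)
    (hanti : ∀ i, IsAntichain (· ≤ ·) (d i : Set α))
    (hdisj : ∀ i j, i ≠ j → Disjoint (d i) (d j)) :
    ∃ e : Fin p → Finset α, (∀ i, IsAntichain (· ≤ ·) (e i : Set α)) ∧
      (∀ i j, i ≠ j → Disjoint (e i) (e j)) ∧
      (∑ i, (e i).card = ∑ i, (d i).card) ∧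
      ∀ i j : Fin p, i < j → ∀ x ∈ e i, ∀ y ∈ e j, ¬ y < x := by
  classical
  set U := Finset.univ.biUnion d with hUdef
  refine ⟨fun i => U.filter (fun x => pht U x = (i : ℕ)), ?_, ?_, ?_, ?_⟩
  · intro i a ha b hb hne hle
    simp only [Finset.coe_filter, Set.mem_setOf_eq] at ha hb
    have := pht_lt ha.1 hb.1 (lt_of_le_of_ne hle hne)
    omega
  · intro i j hne
    rw [Finset.disjoint_left]
    intro x hx hx'
    simp only [Finset.mem_filter] at hx hx'
    have h2 := hx.2; have h3 := hx'.2
    exact hne (Fin.ext (by omega))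
  · have hd : ∀ i ∈ (Finset.univ : Finset (Fin p)), ∀ j ∈ Finset.univ, i ≠ j →
        Disjoint (U.filter (fun x => pht U x = (i : ℕ)))
          (U.filter (fun x => pht U x = (j : ℕ))) := by
      intro i _ j _ hne
      rw [Finset.disjoint_left]
      intro x hx hx'
      simp only [Finset.mem_filter] at hx hx'
      have h2 := hx.2; have h3 := hx'.2
      exact hne (Fin.ext (by omega))
    have hcov : Finset.univ.biUnion (fun i : Fin p => U.filter (fun x => pht U x = (i : ℕ))) = U := by
      ext x
      simp only [Finset.mem_biUnion, Finset.mem_filter, Finset.mem_univ, true_and]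
      constructor
      · rintro ⟨i, hx, -⟩; exact hx
      · intro hx
        exact ⟨⟨pht U x, pht_lt_p d hanti hx⟩, hx, rfl⟩
    calc ∑ i : Fin p, (U.filter (fun x => pht U x = (i : ℕ))).card
        = (Finset.univ.biUnion (fun i : Fin p => U.filter (fun x => pht U x = (i : ℕ)))).card :=
          (Finset.card_biUnion hd).symm
      _ = U.card := by rw [hcov]
      _ = ∑ i, (d i).card := Finset.card_biUnion (fun i _ j _ hij => hdisj i j hij)
  · intro i j hij x hx y hy hlt
    simp only [Finset.mem_filter] at hx hy
    have h1 := pht_lt hy.1 hx.1 hlt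
    have h2 := hx.2; have h3 := hy.2
    rw [Fin.lt_def] at hij
    omega

end AuxAnti

section AuxSort

variable {n : ℕ} (h : α ≃ Fin n)

/-- The elements of `s` listed in increasing `h`-order. -/
noncomputable def hSort (s : Finset α) : List α :=
  ((s.image h).sort (· ≤ ·)).map h.symm

lemma mem_hSort {s : Finset α} {a : α} : a ∈ hSort h s ↔ a ∈ s := by
  simp only [hSort, List.mem_map, Finset.mem_sort, Finset.mem_image]
  constructor
  · rintro ⟨b, ⟨c, hc, rfl⟩, rfl⟩
    simpa using hc
  · intro ha
    exact ⟨h a, ⟨a, ha, rfl⟩, h.symm_apply_apply a⟩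

lemma nodup_hSort (s : Finset α) : (hSort h s).Nodup :=
  (Finset.sort_nodup _ _).map h.symm.injective

lemma chain'_hSort (s : Finset α) : (hSort h s).Chain' (fun a b => h a < h b) := by
  rw [hSort]; show List.IsChain _ _; rw [List.isChain_map]
  have := List.Pairwise.isChain (Finset.sortedLT_sort (s.image h)).pairwise
  simpa [Equiv.apply_symm_apply] using this

lemma length_hSort (s : Finset α) : (hSort h s).length = s.card := by
  rw [hSort, List.length_map, Finset.length_sort,
    Finset.card_image_of_injective s h.injective]

end AuxSort

section AuxDesc

variable [Preorder α]

lemma descCount_set_le (l : List α) :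
    ∀ m ∈ {m | ∃ t : List α, t.Sublist l ∧ t.Pairwise (fun a b => ¬ a < b) ∧ t.length = m},
      m ≤ l.length := by
  rintro m ⟨t, hs, -, rfl⟩
  exact hs.length_le

lemma descCount_spec (l : List α) :
    ∃ t : List α, t.Sublist l ∧ t.Pairwise (fun a b => ¬ a < b) ∧
      t.length = descCount l := by
  have h0 : (0 : ℕ) ∈ {m | ∃ t : List α, t.Sublist l ∧ t.Pairwise (fun a b => ¬ a < b) ∧
      t.length = m} := ⟨[], List.nil_sublist l, List.Pairwise.nil, rfl⟩
  exact Nat.sSup_mem ⟨0, h0⟩ ⟨l.length, descCount_set_le l⟩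

lemma descCount_le_length (l : List α) : descCount l ≤ l.length := by
  obtain ⟨t, hs, -, hlen⟩ := descCount_spec l
  rw [← hlen]; exact hs.length_le

lemma le_descCount {l t : List α} (hs : t.Sublist l)
    (hp : t.Pairwise (fun a b => ¬ a < b)) : t.length ≤ descCount l :=
  le_csSup ⟨l.length, descCount_set_le l⟩ ⟨t, hs, hp, rfl⟩

end AuxDesc

/-- Any family of `p` disjoint antichains of maximal total size can be rearranged into a
non-semi-overlapping family of the same total size; consequently `D'_p` equals `D_p`,
the maximal total size of `p` disjoint antichains. -/
theorem antichains_rearrange [PartialOrder α] {n p : ℕ}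
    (h : α ≃ Fin n) (hlin : ∀ x y : α, x < y → h x < h y)
    (d : Fin p → Finset α)
    (hanti : ∀ i, IsAntichain (· ≤ ·) (d i : Set α))
    (hdisj : ∀ i j, i ≠ j → Disjoint (d i) (d j))
    (hmax : ∀ d' : Fin p → Finset α, (∀ i, IsAntichain (· ≤ ·) (d' i : Set α)) →
      (∀ i j, i ≠ j → Disjoint (d' i) (d' j)) →
      ∑ i, (d' i).card ≤ ∑ i, (d i).card) :
    (∃ e : Fin p → Finset α, (∀ i, IsAntichain (· ≤ ·) (e i : Set α)) ∧
      (∀ i j, i ≠ j → Disjoint (e i) (e j)) ∧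
      (∑ i, (e i).card = ∑ i, (d i).card) ∧
      ∀ i j : Fin p, i < j → ∀ x ∈ e i, ∀ y ∈ e j, ¬ y < x) ∧
    Dval h (fun x y : α => x < y) p =
      sSup {m | ∃ d' : Fin p → Finset α, (∀ i, IsAntichain (· ≤ ·) (d' i : Set α)) ∧
        (∀ i j, i ≠ j → Disjoint (d' i) (d' j)) ∧ m = ∑ i, (d' i).card} := by
  classical
  letI : Fintype α := Fintype.ofEquiv (Fin n) h.symm
  have hcardα : Fintype.card α = n := by
    rw [Fintype.card_congr h, Fintype.card_fin]
  refine ⟨exists_peel d hanti hdisj, ?_⟩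
  have hDbdd : ∀ m ∈ {m | ∃ d' : Fin p → Finset α, (∀ i, IsAntichain (· ≤ ·) (d' i : Set α)) ∧
      (∀ i j, i ≠ j → Disjoint (d' i) (d' j)) ∧ m = ∑ i, (d' i).card}, m ≤ n := by
    rintro m ⟨d', hanti', hdisj', rfl⟩
    calc ∑ i, (d' i).card = (Finset.univ.biUnion d').card :=
          (Finset.card_biUnion (fun i _ j _ hij => hdisj' i j hij)).symm
      _ ≤ Fintype.card α := Finset.card_le_univ _
      _ = n := hcardα
  have hD'bdd : ∀ m ∈ {m | ∃ S : Fin p → List α, (∀ i, IsHOrdered h (S i)) ∧ FamilyDisjoint S ∧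
      (∀ i j, i ≠ j → ¬ SemiOverlapping (fun x y : α => x < y) (S i) (S j)) ∧
      m = ∑ i, descCount (S i)}, m ≤ n := by
    rintro m ⟨S, hord, hdisjS, -, rfl⟩
    calc ∑ i, descCount (S i) ≤ ∑ i, (S i).toFinset.card := by
          refine Finset.sum_le_sum (fun i _ => ?_)
          rw [List.toFinset_card_of_nodup (hord i).1]
          exact descCount_le_length _
      _ = (Finset.univ.biUnion (fun i => (S i).toFinset)).card := by
          rw [Finset.card_biUnion]
          intro i _ j _ hij
          rw [Function.onFun, Finset.disjoint_left]
          intro x hx hx'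
          exact hdisjS i j hij x (List.mem_toFinset.mp hx) (List.mem_toFinset.mp hx')
      _ ≤ Fintype.card α := Finset.card_le_univ _
      _ = n := hcardα
  have hdescnil : descCount ([] : List α) = 0 := Nat.le_zero.mp (descCount_le_length _)
  unfold Dval
  apply le_antisymm
  · apply csSup_le
    · refine ⟨0, fun _ => [], fun i => ⟨List.nodup_nil, List.isChain_nil⟩,
        fun i j _ x hx => absurd hx List.not_mem_nil, fun i j _ hso => ?_, by simp [hdescnil]⟩
      obtain ⟨⟨x, hx, -⟩, -⟩ := hso
      exact List.not_mem_nil hx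
    · rintro m ⟨S, hord, hdisjS, -, rfl⟩
      choose t ht1 ht2 ht3 using fun i => descCount_spec (S i)
      haveI : IsTrans α (fun a b : α => h a < h b) := ⟨fun _ _ _ hab hbc => lt_trans hab hbc⟩
      have hpwh : ∀ i, (t i).Pairwise (fun a b => h a < h b) := fun i =>
        ((List.isChain_iff_pairwise.mp (hord i).2)).sublist (ht1 i)
      have hQ : ∀ i, (t i).Pairwise (fun a b => ¬ a < b ∧ ¬ b < a) := fun i =>
        ((ht2 i).and (hpwh i)).imp (fun hab =>
          ⟨hab.1, fun hba => lt_asymm hab.2 (hlin _ _ hba)⟩)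
      have hsym : ∀ i, ∀ a ∈ t i, ∀ b ∈ t i, a ≠ b → ¬ a < b ∧ ¬ b < a := fun i =>
        by
          haveI : Std.Symm (fun a b : α => ¬ a < b ∧ ¬ b < a) := ⟨fun a b hab => ⟨hab.2, hab.1⟩⟩
          exact (hQ i).forall
      have hnd : ∀ i, (t i).Nodup := fun i => (ht1 i).nodup (hord i).1
      refine le_csSup ⟨n, hDbdd⟩ ⟨fun i => (t i).toFinset, ?_, ?_, ?_⟩
      · intro i a ha b hb hne hle
        rw [Finset.mem_coe, List.mem_toFinset] at ha hb
        exact (hsym i a ha b hb hne).1 (lt_of_le_of_ne hle hne)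
      · intro i j hij
        rw [Finset.disjoint_left]
        intro x hx hx'
        rw [List.mem_toFinset] at hx hx'
        exact hdisjS i j hij x ((ht1 i).subset hx) ((ht1 j).subset hx')
      · refine Finset.sum_congr rfl (fun i _ => ?_)
        rw [List.toFinset_card_of_nodup (hnd i), ht3 i]
  · apply csSup_le
    · refine ⟨0, fun _ => ∅, fun i => ?_, fun i j _ => Finset.disjoint_empty_left _, by simp⟩
      simp only [Finset.coe_empty]
      exact Set.subsingleton_empty.isAntichain _
    · rintro m ⟨d', hanti', hdisj', rfl⟩
      obtain ⟨e, heanti, hedisj, hesum, hbelow⟩ := exists_peel d' hanti' hdisj'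
      set S : Fin p → List α := fun i => hSort h (e i) with hSdef
      have hmem : ∀ (i : Fin p) (a : α), a ∈ S i ↔ a ∈ e i := fun i a => mem_hSort h
      have hdc : ∀ i, (e i).card ≤ descCount (S i) := by
        intro i
        have hpw : (S i).Pairwise (fun a b => ¬ a < b) := by
          refine List.Pairwise.imp_of_mem ?_ (nodup_hSort h (e i))
          intro a b ha hb hne hab
          exact heanti i (Finset.mem_coe.mpr ((hmem i a).mp ha))
            (Finset.mem_coe.mpr ((hmem i b).mp hb)) hne hab.le
        have := le_descCount (List.Sublist.refl (S i)) hpw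
        rwa [hSdef, length_hSort] at this
      have hmemD' : (∑ i, descCount (S i)) ∈ {m | ∃ S : Fin p → List α,
          (∀ i, IsHOrdered h (S i)) ∧ FamilyDisjoint S ∧
          (∀ i j, i ≠ j → ¬ SemiOverlapping (fun x y : α => x < y) (S i) (S j)) ∧
          m = ∑ i, descCount (S i)} := by
        refine ⟨S, fun i => ⟨nodup_hSort h _, chain'_hSort h _⟩, ?_, ?_, rfl⟩
        · intro i j hij x hx hx'
          exact Finset.disjoint_left.mp (hedisj i j hij) ((hmem i x).mp hx) ((hmem j x).mp hx')
        · rintro i j hij ⟨⟨x, hx, y, hy, hyx⟩, ⟨x', hx', y', hy', hxy⟩⟩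
          rcases hij.lt_or_gt with hlt | hlt
          · exact hbelow i j hlt x ((hmem i x).mp hx) y ((hmem j y).mp hy) hyx
          · exact hbelow j i hlt y' ((hmem j y').mp hy') x' ((hmem i x').mp hx') hxy
      calc ∑ i, (d' i).card = ∑ i, (e i).card := hesum.symm
        _ ≤ ∑ i, descCount (S i) := Finset.sum_le_sum (fun i _ => hdc i)
        _ ≤ sSup {m | ∃ S : Fin p → List α, (∀ i, IsHOrdered h (S i)) ∧ FamilyDisjoint S ∧
              (∀ i j, i ≠ j → ¬ SemiOverlapping (fun x y : α => x < y) (S i) (S j)) ∧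
              m = ∑ i, descCount (S i)} := le_csSup ⟨n, hD'bdd⟩ hmemD'
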